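/- Let d ≥ 1, let f be a form of degree d in k[x0,x1,x2], and let ξ, η ∈ k satisfy f(1, ξ, η) = 0. Then there exist forms G, H of degree d−1 such that f = (x1 − ξ·x0)·G + (x2 − η·x0)·H. -/

import Mathlib

open MvPolynomial

private lemma deg3 (m : Fin 3 →₀ ℕ) : m.degree = m 0 + m 1 + m 2 := by
  rw [Finsupp.degree_apply, Finset.sum_subset (Finset.subset_univ m.support)
    (fun i _ hi => Finsupp.notMem_support_iff.mp hi), Fin.sum_univ_three]

private lemma eq_single_of_ne_zero {d : ℕ} (m : Fin 3 →₀ ℕ) (hdeg : m.degree = d)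
    (h1 : m 1 = 0) (h2 : m 2 = 0) : m = Finsupp.single 0 d := by
  rw [deg3, h1, h2] at hdeg
  ext i
  fin_cases i <;> simp [Finsupp.single_apply] <;> omega

private lemma sub_single_add {m : Fin 3 →₀ ℕ} {j : Fin 3} (hj : m j ≠ 0) :
    Finsupp.single j 1 + (m - Finsupp.single j 1) = m := by
  ext i
  simp only [Finsupp.add_apply, Finsupp.tsub_apply, Finsupp.single_apply]
  rcases eq_or_ne j i with rfl | h
  · simp only [eq_self_iff_true, if_true]; omega
  · rw [if_neg h]; simp

private lemma sub_single_deg {d : ℕ} {m : Fin 3 →₀ ℕ} {j : Fin 3} (hj : m j ≠ 0)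
    (hm : m.degree = d) : (m - Finsupp.single j 1).degree = d - 1 := by
  rw [deg3] at hm ⊢
  simp only [Finsupp.tsub_apply, Finsupp.single_apply]
  fin_cases j <;> simp_all <;> omega

/-- Key splitting lemma: a homogeneous polynomial of degree `d ≥ 1` whose `x0^d`
coefficient vanishes lies in the monomial ideal `(x1, x2)` homogeneously. -/
private lemma split {k : Type*} [CommRing k] {d : ℕ} (hd : 1 ≤ d)
    (g : MvPolynomial (Fin 3) k) (hg : g.IsHomogeneous d)
    (h0 : coeff (Finsupp.single 0 d) g = 0) :
    ∃ G H : MvPolynomial (Fin 3) k,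
      G.IsHomogeneous (d - 1) ∧ H.IsHomogeneous (d - 1) ∧ g = X 1 * G + X 2 * H := by
  have hdeg : ∀ m ∈ g.support, Finsupp.degree m = d := by
    intro m hm
    by_contra h
    exact MvPolynomial.mem_support_iff.mp hm (hg.coeff_eq_zero h)
  set s1 := g.support.filter (fun m => m 1 ≠ 0) with hs1
  set s2 := g.support.filter (fun m => ¬ m 1 ≠ 0) with hs2
  have hs2' : ∀ m ∈ s2, m 2 ≠ 0 := by
    intro m hm h2
    rw [hs2, Finset.mem_filter] at hm
    have : m = Finsupp.single 0 d :=
      eq_single_of_ne_zero m (hdeg m hm.1) (by simpa using hm.2) h2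
    rw [this] at hm
    exact MvPolynomial.mem_support_iff.mp hm.1 h0
  refine ⟨∑ m ∈ s1, monomial (m - Finsupp.single 1 1) (coeff m g),
          ∑ m ∈ s2, monomial (m - Finsupp.single 2 1) (coeff m g), ?_, ?_, ?_⟩
  · apply MvPolynomial.IsHomogeneous.sum
    intro m hm
    rw [hs1, Finset.mem_filter] at hm
    exact isHomogeneous_monomial _ (sub_single_deg hm.2 (hdeg m hm.1))
  · apply MvPolynomial.IsHomogeneous.sum
    intro m hm
    exact isHomogeneous_monomial _ (sub_single_deg (hs2' m hm)
      (hdeg m (Finset.mem_filter.mp hm).1))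
  · conv_lhs => rw [(g.support_sum_monomial_coeff).symm]
    rw [← Finset.sum_filter_add_sum_filter_not g.support (fun m => m 1 ≠ 0), ← hs1, ← hs2,
      Finset.mul_sum, Finset.mul_sum]
    congr 1
    · apply Finset.sum_congr rfl
      intro m hm
      rw [hs1, Finset.mem_filter] at hm
      rw [X, monomial_mul, one_mul, sub_single_add hm.2]
    · apply Finset.sum_congr rfl
      intro m hm
      rw [X, monomial_mul, one_mul, sub_single_add (hs2' m hm)]

/-- If `f` is a form of degree `d ≥ 1` vanishing at `(1, ξ, η)`, then
`f = (x1 − ξ·x0)·G + (x2 − η·x0)·H` for some forms `G, H` of degree `d − 1`. -/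
theorem stmt_4 {k : Type*} [Field k] [IsAlgClosed k] [CharZero k]
    (d : ℕ) (hd : 1 ≤ d)
    (f : MvPolynomial (Fin 3) k) (hf : f.IsHomogeneous d)
    (ξ η : k) (hval : eval ![1, ξ, η] f = 0) :
    ∃ G H : MvPolynomial (Fin 3) k,
      G.IsHomogeneous (d - 1) ∧ H.IsHomogeneous (d - 1) ∧
        f = (X 1 - C ξ * X 0) * G + (X 2 - C η * X 0) * H := by
  -- change of variables
  set φv : Fin 3 → MvPolynomial (Fin 3) k := ![X 0, X 1 + C ξ * X 0, X 2 + C η * X 0] with hφv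
  set ψv : Fin 3 → MvPolynomial (Fin 3) k := ![X 0, X 1 - C ξ * X 0, X 2 - C η * X 0] with hψv
  set g : MvPolynomial (Fin 3) k := aeval φv f with hg
  have hcomp : (fun i => aeval (R := k) ψv (φv i)) = X := by
    funext i
    fin_cases i <;> simp [hφv, hψv] <;> ring
  have hpsiphi : ∀ p : MvPolynomial (Fin 3) k, aeval ψv (aeval φv p) = p := by
    intro p
    rw [comp_aeval_apply, hcomp, aeval_X_left_apply]
  -- g is homogeneous of degree d
  have hghom : g.IsHomogeneous d := by
    have := hf.aeval (n := 1) φv (fun i => by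
      fin_cases i <;> simp only [hφv, Matrix.cons_val_zero, Matrix.cons_val_one, Matrix.head_cons,
        Matrix.cons_val_two, Matrix.tail_cons] <;>
        first
          | exact isHomogeneous_X _ _
          | exact (isHomogeneous_X _ _).add ((isHomogeneous_X k 0).C_mul _))
    simpa [hg] using this
  -- g vanishes at (1,0,0)
  have haev : ∀ (v : Fin 3 → k) (p : MvPolynomial (Fin 3) k), aeval v p = eval v p := by
    intro v p
    exact DFunLike.congr_fun (coe_aeval_eq_eval (f := v)) p
  have hgval : eval ![1, 0, 0] g = 0 := by
    rw [← haev, hg, comp_aeval_apply]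
    have : (fun i => aeval ![(1:k),0,0] (φv i)) = ![1, ξ, η] := by
      funext i; fin_cases i <;> simp [hφv]
    rw [this, haev, hval]
  -- hence coeff of x0^d in g vanishes
  have h0 : coeff (Finsupp.single 0 d) g = 0 := by
    rw [eval_eq' ![1,0,0] g] at hgval
    rcases em (Finsupp.single 0 d ∈ g.support) with hmem | hmem
    · rw [Finset.sum_eq_single (Finsupp.single 0 d)] at hgval
      · rw [Fin.prod_univ_three] at hgval
        simpa [Finsupp.single_apply] using hgval
      · intro m hm hne
        have hdm : Finsupp.degree m = d := by
          by_contra h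
          exact MvPolynomial.mem_support_iff.mp hm (hghom.coeff_eq_zero h)
        have : m 1 ≠ 0 ∨ m 2 ≠ 0 := by
          by_contra h
          push_neg at h
          exact hne (eq_single_of_ne_zero m hdm h.1 h.2)
        rw [Fin.prod_univ_three]
        rcases this with h | h <;> simp [zero_pow h]
      · intro h; exact absurd hmem h
    · exact MvPolynomial.notMem_support_iff.mp hmem
  obtain ⟨G1, H1, hG1, hH1, hsplit⟩ := split hd g hghom h0
  have hψhom : ∀ i, (ψv i).IsHomogeneous 1 := fun i => by
    fin_cases i <;> simp only [hψv, Matrix.cons_val_zero, Matrix.cons_val_one, Matrix.head_cons,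
      Matrix.cons_val_two, Matrix.tail_cons] <;>
      first
        | exact isHomogeneous_X _ _
        | exact (isHomogeneous_X _ _).sub ((isHomogeneous_X k 0).C_mul _)
  refine ⟨aeval ψv G1, aeval ψv H1, by simpa using hG1.aeval ψv hψhom,
    by simpa using hH1.aeval ψv hψhom, ?_⟩
  have := hpsiphi f
  rw [← hg] at this
  rw [← this, hsplit]
  simp only [map_add, map_mul, aeval_X]
  have h1 : ψv 1 = X 1 - C ξ * X 0 := by simp [hψv]
  have h2 : ψv 2 = X 2 - C η * X 0 := by simp [hψv]
  rw [h1, h2]
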